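/- Let 𝒳, 𝒴 be nonempty finite alphabets, W a discrete memoryless channel from 𝒳 to 𝒴, and η ∈ (0, 1/(2|𝒴|)). Then 0 ≤ C_η(W) − C(W) ≤ 2η|𝒴|, where C(W) is the capacity (in its dual minimax form) and C_η(W) the pseudo-capacity. -/

import Mathlib

/-- A probability distribution on a finite alphabet. -/
def IsDist {𝒴 : Type*} [Fintype 𝒴] (P : 𝒴 → ℝ) : Prop :=
  (∀ y, 0 ≤ P y) ∧ ∑ y, P y = 1

/-- The Kullback–Leibler divergence, valued in `EReal`: it equals the real sum
`∑ y, P y * log (P y / Q y)` (with the convention `0 · log (0/q) = 0`, automatic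
in Lean) when `P ≪ Q`, and `+∞` if `P y > 0 = Q y` for some `y`. -/
noncomputable def klE {𝒴 : Type*} [Fintype 𝒴] (P Q : 𝒴 → ℝ) : EReal :=
  if ∀ y, Q y = 0 → P y = 0 then ((∑ y, P y * Real.log (P y / Q y) : ℝ) : EReal) else ⊤

/-- The capacity of a DMC in the Csiszár–Kemperman dual (minimax) form:
`C(W) = min_{Q ∈ 𝒫(𝒴)} max_{x ∈ 𝒳} D(W(·|x) ‖ Q)`. -/
noncomputable def capE {𝒳 𝒴 : Type*} [Fintype 𝒳] [Fintype 𝒴] (W : 𝒳 → 𝒴 → ℝ) : EReal :=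
  ⨅ (Q : 𝒴 → ℝ) (_ : IsDist Q), ⨆ x : 𝒳, klE (W x) Q

/-- The pseudo-capacity `C_η(W) = min_{Q ∈ 𝒫_η(𝒴)} max_{x ∈ 𝒳} D(W(·|x) ‖ Q)`. -/
noncomputable def pseudoCapE {𝒳 𝒴 : Type*} [Fintype 𝒳] [Fintype 𝒴]
    (η : ℝ) (W : 𝒳 → 𝒴 → ℝ) : EReal :=
  ⨅ (Q : 𝒴 → ℝ) (_ : IsDist Q ∧ ∀ y, η ≤ Q y), ⨆ x : 𝒳, klE (W x) Q

/-- `0 ≤ C_η(W) − C(W) ≤ 2η|𝒴|` for `η ∈ (0, 1/(2|𝒴|))`,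
stated as the pair of inequalities `C(W) ≤ C_η(W)` and `C_η(W) ≤ C(W) + 2η|𝒴|`. -/
theorem stmt_1 {𝒳 𝒴 : Type*} [Fintype 𝒳] [Nonempty 𝒳] [Fintype 𝒴] [Nonempty 𝒴]
    (W : 𝒳 → 𝒴 → ℝ) (hW : ∀ x, IsDist (W x))
    (η : ℝ) (hη : 0 < η) (hη' : η < 1 / (2 * Fintype.card 𝒴)) :
    capE W ≤ pseudoCapE η W ∧
      pseudoCapE η W ≤ capE W + ((2 * η * Fintype.card 𝒴 : ℝ) : EReal) := by
  constructor
  · exact le_iInf₂ fun Q hQ => iInf₂_le Q hQ.1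
  · set n : ℝ := (Fintype.card 𝒴 : ℝ) with hn
    have hn1 : (1:ℝ) ≤ n := by
      rw [hn]
      exact_mod_cast Nat.one_le_iff_ne_zero.mpr Fintype.card_ne_zero
    have ht : η * n < 1/2 := by
      have h2n : (0:ℝ) < 2 * n := by linarith
      rw [lt_div_iff₀ h2n] at hη'
      nlinarith
    have ht0 : 0 < η * n := mul_pos hη (by linarith)
    have h1 : (0:ℝ) < 1 - η * n := by linarith
    -- key log bound : -log(1 - ηn) ≤ 2ηn
    have hlog : -Real.log (1 - η * n) ≤ 2 * η * n := by
      have h2 : Real.exp (-(2 * η * n)) ≤ 1 - η * n := by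
        rw [Real.exp_neg]
        have he : 1 + 2 * η * n ≤ Real.exp (2 * η * n) := by
          have := Real.add_one_le_exp (2 * η * n); linarith
        have hp : (0:ℝ) < 1 + 2 * η * n := by nlinarith
        calc (Real.exp (2 * η * n))⁻¹ ≤ (1 + 2 * η * n)⁻¹ := by
              apply inv_anti₀ hp he
          _ ≤ 1 - η * n := by
              rw [inv_le_iff_one_le_mul₀ hp]
              nlinarith
      have := (Real.le_log_iff_exp_le h1).2 h2
      linarith
    rw [← EReal.sub_le_iff_le_add (Or.inl (EReal.coe_ne_bot _)) (Or.inl (EReal.coe_ne_top _))]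
    refine le_iInf₂ fun Q hQ => ?_
    rw [EReal.sub_le_iff_le_add (Or.inl (EReal.coe_ne_bot _)) (Or.inl (EReal.coe_ne_top _))]
    set Q' : 𝒴 → ℝ := fun y => (1 - η * n) * Q y + η with hQ'def
    have hQ'lb : ∀ y, η ≤ Q' y := fun y => by
      have := mul_nonneg h1.le (hQ.1 y); simp only [hQ'def]; linarith
    have hQ'dist : IsDist Q' := by
      constructor
      · exact fun y => le_trans hη.le (hQ'lb y)
      · simp only [hQ'def, Finset.sum_add_distrib, ← Finset.mul_sum, hQ.2,
          Finset.sum_const, Finset.card_univ, nsmul_eq_mul, mul_one]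
        push_cast [← hn]
        ring
    refine le_trans (iInf₂_le Q' ⟨hQ'dist, hQ'lb⟩) ?_
    refine iSup_le fun x => le_trans ?_ (add_le_add_left (le_iSup (fun x => klE (W x) Q) x) _)
    -- klE (W x) Q' ≤ klE (W x) Q + 2ηn
    by_cases hac : ∀ y, Q y = 0 → W x y = 0
    · have hQ'pos : ∀ y, 0 < Q' y := fun y => lt_of_lt_of_le hη (hQ'lb y)
      rw [klE, if_pos (fun y h => absurd h (ne_of_gt (hQ'pos y))), klE, if_pos hac,
        ← EReal.coe_add, EReal.coe_le_coe_iff]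
      have hterm : ∀ y, W x y * Real.log (W x y / Q' y) ≤
          W x y * Real.log (W x y / Q y) + W x y * (2 * η * n) := by
        intro y
        rcases eq_or_lt_of_le ((hW x).1 y) with hP0 | hPpos
        · simp [← hP0]
        · have hQpos : 0 < Q y := by
            rcases eq_or_lt_of_le (hQ.1 y) with h0 | h; · exact absurd (hac y h0.symm) (ne_of_gt hPpos)
            exact h
          have hmul : 0 < (1 - η * n) * Q y := mul_pos h1 hQpos
          have hQ'ge : (1 - η * n) * Q y ≤ Q' y := by simp only [hQ'def]; linarith
          have hlQ' : Real.log (1 - η * n) + Real.log (Q y) ≤ Real.log (Q' y) := by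
            rw [← Real.log_mul (ne_of_gt h1) (ne_of_gt hQpos)]
            exact Real.log_le_log hmul hQ'ge
          have key : Real.log (W x y / Q' y) ≤ Real.log (W x y / Q y) + 2 * η * n := by
            rw [Real.log_div (ne_of_gt hPpos) (ne_of_gt (hQ'pos y)),
              Real.log_div (ne_of_gt hPpos) (ne_of_gt hQpos)]
            linarith
          nlinarith [mul_le_mul_of_nonneg_left key (le_of_lt hPpos)]
      calc ∑ y, W x y * Real.log (W x y / Q' y)
          ≤ ∑ y, (W x y * Real.log (W x y / Q y) + W x y * (2 * η * n)) :=
            Finset.sum_le_sum fun y _ => hterm y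
        _ = ∑ y, W x y * Real.log (W x y / Q y) + 2 * η * n := by
            rw [Finset.sum_add_distrib, ← Finset.sum_mul, (hW x).2, one_mul]
    · simp only [klE, if_neg hac, EReal.top_add_coe]
      exact le_top
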